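/- Under the PoB incentive-compatibility assumption L > ΔR, any strategy whose first deviation occurs at some round t earns strictly less than perpetual honesty: if (a_n) is a bounded real sequence with a_n = r for all n < t, a_t ≤ ρ_p·r + ΔR − P, and a_n ≤ ρ_p·r for all n > t, then ∑_{n=0}^∞ δ^n·a_n ≤ r/(1−δ) + δ^t·(ΔR − L) < r/(1−δ). -/

import Mathlib

/-- Under the PoB incentive-compatibility assumption `L > ΔR`, any bounded
payoff sequence whose first deviation occurs at round `t` earns discounted payoff at most
`r/(1-δ) + δ^t (ΔR - L)`, which is strictly less than the payoff `r/(1-δ)` of perpetual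
honesty. -/
theorem pob_first_deviation_lt_honest
    (δ r ΔR P ρp : ℝ)
    (hδ0 : 0 < δ) (hδ1 : δ < 1)
    (hr : 0 ≤ r) (hΔR : 0 ≤ ΔR) (hP : 0 ≤ P)
    (hρp0 : 0 ≤ ρp) (hρp1 : ρp < 1)
    (L : ℝ) (hL : L = P + (1 - ρp) * r / (1 - δ))
    (hIC : L > ΔR)
    (t : ℕ) (a : ℕ → ℝ)
    (hbd : ∃ C, ∀ n, |a n| ≤ C)
    (hbefore : ∀ n < t, a n = r)
    (hat : a t ≤ ρp * r + ΔR - P)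
    (hafter : ∀ n > t, a n ≤ ρp * r) :
    (∑' n : ℕ, δ ^ n * a n) ≤ r / (1 - δ) + δ ^ t * (ΔR - L) ∧
      r / (1 - δ) + δ ^ t * (ΔR - L) < r / (1 - δ) := by
  have h1δ : 0 < 1 - δ := by linarith
  have hgs : Summable (fun n : ℕ => δ ^ n) := summable_geometric_of_lt_one hδ0.le hδ1
  set b : ℕ → ℝ := fun n =>
    ρp * r * δ ^ n + (if n < t then (1 - ρp) * r * δ ^ n else 0) +
      (if n = t then δ ^ t * (ΔR - P) else 0) with hb
  have hs1 : Summable (fun n : ℕ => ρp * r * δ ^ n) := hgs.mul_left _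
  have hs2 : Summable (fun n : ℕ => if n < t then (1 - ρp) * r * δ ^ n else 0) := by
    apply summable_of_ne_finset_zero (s := Finset.range t)
    intro n hn
    simp [Finset.mem_range] at hn
    simp [hn.not_gt]
  have hs3 : Summable (fun n : ℕ => if n = t then δ ^ t * (ΔR - P) else 0) := by
    apply summable_of_ne_finset_zero (s := {t})
    intro n hn
    simp at hn
    simp [hn]
  have hsb : Summable b := (hs1.add hs2).add hs3
  have hsa : Summable (fun n : ℕ => δ ^ n * a n) := by
    obtain ⟨C, hC⟩ := hbd
    have habs : Summable (fun n : ℕ => |δ ^ n * a n|) := by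
      apply Summable.of_nonneg_of_le (fun n => abs_nonneg _) _ (hgs.mul_left C)
      intro n
      rw [abs_mul, abs_of_nonneg (pow_nonneg hδ0.le n)]
      calc δ ^ n * |a n| ≤ δ ^ n * C := by
            exact mul_le_mul_of_nonneg_left (hC n) (pow_nonneg hδ0.le n)
        _ = C * δ ^ n := mul_comm _ _
    exact habs.of_abs
  have hle : ∀ n, δ ^ n * a n ≤ b n := by
    intro n
    have hpn : (0:ℝ) ≤ δ ^ n := pow_nonneg hδ0.le n
    rcases lt_trichotomy n t with h | h | h
    · rw [hbefore n h]
      simp [hb, h, h.ne]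
      nlinarith
    · subst h
      simp [hb]
      nlinarith [mul_le_mul_of_nonneg_left hat hpn]
    · have := hafter n h
      simp [hb, h.not_gt, h.ne']
      nlinarith [mul_le_mul_of_nonneg_left this hpn]
  have hmain : (∑' n : ℕ, δ ^ n * a n) ≤ ∑' n, b n := Summable.tsum_le_tsum hle hsa hsb
  have ht1 : (∑' n : ℕ, ρp * r * δ ^ n) = ρp * r / (1 - δ) := by
    rw [tsum_mul_left, tsum_geometric_of_lt_one hδ0.le hδ1]
    ring
  have ht2 : (∑' n : ℕ, if n < t then (1 - ρp) * r * δ ^ n else 0)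
      = (1 - ρp) * r * ((1 - δ ^ t) / (1 - δ)) := by
    rw [tsum_eq_sum (s := Finset.range t) (by
      intro n hn
      simp [Finset.mem_range] at hn
      simp [hn.not_gt])]
    have hcong : ∀ n ∈ Finset.range t,
        (if n < t then (1 - ρp) * r * δ ^ n else 0) = (1 - ρp) * r * δ ^ n :=
      fun n hn => if_pos (Finset.mem_range.mp hn)
    rw [Finset.sum_congr rfl hcong, ← Finset.mul_sum, geom_sum_eq (by linarith : δ ≠ 1)]
    congr 1
    rw [div_eq_div_iff (by linarith : δ - 1 ≠ 0) (by linarith : (1:ℝ) - δ ≠ 0)]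
    ring
  have ht3 : (∑' n : ℕ, if n = t then δ ^ t * (ΔR - P) else 0) = δ ^ t * (ΔR - P) :=
    tsum_ite_eq t _
  have htb : (∑' n, b n) = r / (1 - δ) + δ ^ t * (ΔR - L) := by
    rw [hb, Summable.tsum_add (hs1.add hs2) hs3, Summable.tsum_add hs1 hs2, ht1, ht2, ht3, hL]
    field_simp
    ring
  have hstrict : δ ^ t * (ΔR - L) < 0 :=
    mul_neg_of_pos_of_neg (pow_pos hδ0 t) (by linarith)
  exact ⟨htb ▸ hmain, by linarith⟩
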